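/- Let X and Z be complex Banach spaces, T ∈ B(X), B ∈ B(Z), and assume qT = Bq for some injective q ∈ B(X,Z) whose range qX is closed in Z. Let λ ∈ σ(T)∖(σ_p(T*) ∪ σ_p(B*) ∪ σ_r(B*)), and let X₀* be a closed subspace of X* of finite codimension (i.e., the quotient X*/X₀* is finite-dimensional). Then there exists a sequence {z*_n} in Z* such that q*z*_n ∈ X₀* and ‖q*z*_n‖ = 1 for every n, and ‖(λ−B*)z*_n‖ → 0 as n → ∞. -/

import Mathlib

set_option maxHeartbeats 10000000
set_option synthInstance.maxHeartbeats 400000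


open NormedSpace Filter Topology Set

noncomputable section

/-- The Banach-space adjoint (dual map) of a bounded operator:
`(dualOp q) g = g ∘ q`. -/
noncomputable def dualOp {E F : Type*} [NormedAddCommGroup E] [NormedSpace ℂ E]
    [NormedAddCommGroup F] [NormedSpace ℂ F] (q : E →L[ℂ] F) :
    StrongDual ℂ F →L[ℂ] StrongDual ℂ E :=
  (ContinuousLinearMap.compL ℂ E F ℂ).flip q

/-- The point spectrum (set of eigenvalues) of a bounded operator. -/
def pointSpectrum {E : Type*} [NormedAddCommGroup E] [NormedSpace ℂ E]
    (T : E →L[ℂ] E) : Set ℂ :=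
  {lam : ℂ | ∃ x : E, x ≠ 0 ∧ T x = lam • x}

/-- The residual spectrum of a bounded operator: `lam - T` is injective but does not
have dense range. -/
def residualSpectrum {E : Type*} [NormedAddCommGroup E] [NormedSpace ℂ E]
    (T : E →L[ℂ] E) : Set ℂ :=
  {lam : ℂ | Function.Injective (fun x : E => lam • x - T x) ∧
    ¬ Dense (Set.range (fun x : E => lam • x - T x))}

@[simp] lemma dualOp_apply' {E F : Type*} [NormedAddCommGroup E] [NormedSpace ℂ E]
    [NormedAddCommGroup F] [NormedSpace ℂ F] (q : E →L[ℂ] F) (g : StrongDual ℂ F) (x : E) :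
    dualOp q g x = g (q x) := rfl

/-- closed subspace plus finite-dimensional subspace is closed. -/
lemma isClosed_sup_fd {E : Type*} [NormedAddCommGroup E] [NormedSpace ℂ E]
    (U V : Submodule ℂ E) (hU : IsClosed (U : Set E)) [FiniteDimensional ℂ V] :
    IsClosed ((U ⊔ V : Submodule ℂ E) : Set E) := by
  haveI := hU
  let π : E →L[ℂ] (E ⧸ U) :=
    U.mkQ.mkContinuous 1 (fun x => by simpa using Submodule.Quotient.norm_mk_le U x)
  haveI : FiniteDimensional ℂ (V.map U.mkQ) := Module.Finite.map V U.mkQ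
  have hVq : IsClosed ((V.map U.mkQ : Submodule ℂ (E ⧸ U)) : Set (E ⧸ U)) :=
    Submodule.closed_of_finiteDimensional _
  have h1 : (U ⊔ V : Submodule ℂ E) = (V.map U.mkQ).comap U.mkQ := by
    rw [Submodule.comap_map_eq, Submodule.ker_mkQ, sup_comm]
  rw [h1]
  exact hVq.preimage π.continuous

/-- bounded lifting through the adjoint of an injective closed-range operator. -/
lemma exists_dual_lift {X Z : Type*}
    [NormedAddCommGroup X] [NormedSpace ℂ X] [CompleteSpace X]
    [NormedAddCommGroup Z] [NormedSpace ℂ Z] [CompleteSpace Z]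
    (q : X →L[ℂ] Z) (hqinj : Function.Injective q) (hqcl : IsClosed (Set.range q)) :
    ∃ C : ℝ, 0 < C ∧ ∀ f : StrongDual ℂ X, ∃ g : StrongDual ℂ Z, dualOp q g = f ∧ ‖g‖ ≤ C * ‖f‖ := by
  set R : Submodule ℂ Z := LinearMap.range (q : X →ₗ[ℂ] Z) with hR
  have hRcl : IsClosed (R : Set Z) := by
    have : (R : Set Z) = Set.range q := by
      ext z; simp [hR, LinearMap.mem_range]
    rw [this]; exact hqcl
  haveI : CompleteSpace R := hRcl.completeSpace_coe
  let q' : X →L[ℂ] R := q.codRestrict R (fun x => LinearMap.mem_range_self _ x)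
  have hker : LinearMap.ker (q' : X →ₗ[ℂ] R) = ⊥ := by
    rw [LinearMap.ker_eq_bot]
    intro a b hab
    exact hqinj (congrArg Subtype.val hab)
  have hrange : LinearMap.range (q' : X →ₗ[ℂ] R) = ⊤ := by
    rw [LinearMap.range_eq_top]
    rintro ⟨z, hz⟩
    obtain ⟨x, rfl⟩ := LinearMap.mem_range.mp hz
    exact ⟨x, rfl⟩
  let e : X ≃L[ℂ] R := ContinuousLinearEquiv.ofBijective q' hker hrange
  refine ⟨‖(e.symm : R →L[ℂ] X)‖ + 1, by positivity, fun f => ?_⟩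
  obtain ⟨g, hg_ext, hg_norm⟩ := exists_extension_norm_eq R (f.comp (e.symm : R →L[ℂ] X))
  refine ⟨g, ?_, ?_⟩
  · ext x
    have h1 : g (q x) = f (e.symm (q' x)) := by
      have : (q' x : Z) = q x := rfl
      have h2 := hg_ext (q' x)
      simpa [this] using h2
    have h3 : e.symm (q' x) = x := by
      have : q' x = e x := rfl
      rw [this, e.symm_apply_apply]
    simp [h1, h3]
  · rw [hg_norm]
    calc ‖f.comp (e.symm : R →L[ℂ] X)‖ ≤ ‖f‖ * ‖(e.symm : R →L[ℂ] X)‖ :=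
          ContinuousLinearMap.opNorm_comp_le _ _
      _ ≤ (‖(e.symm : R →L[ℂ] X)‖ + 1) * ‖f‖ := by nlinarith [norm_nonneg f, norm_nonneg (e.symm : R →L[ℂ] X)]

lemma surjective_of_dual_bound {E : Type*} [NormedAddCommGroup E] [NormedSpace ℂ E]
    [CompleteSpace E] (A : E →L[ℂ] E) (c : ℝ) (hc : 0 < c)
    (hA : ∀ f : StrongDual ℂ E, c * ‖f‖ ≤ ‖dualOp A f‖) :
    Function.Surjective A := by
  have step1 : ∀ (y : E) (r : ℝ), 0 < r → ‖y‖ < c * r →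
      y ∈ closure (⇑A '' Metric.closedBall 0 r) := by
    intro y r hr hy
    by_contra hyc
    have hconv : Convex ℝ (⇑A '' Metric.closedBall 0 r) :=
      (convex_closedBall (0 : E) r).linear_image (A.restrictScalars ℝ).toLinearMap
    obtain ⟨f, u, hfs, hfy⟩ :=
      geometric_hahn_banach_closed_point hconv.closure isClosed_closure hyc
    have hu0 : 0 < u := by
      have h0 : (0 : E) ∈ closure (⇑A '' Metric.closedBall 0 r) :=
        subset_closure ⟨0, Metric.mem_closedBall_self hr.le, map_zero A⟩
      simpa using hfs 0 h0
    set g : E →L[ℂ] ℂ := f.extendTo𝕜' with hg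
    have hre : ∀ x : E, RCLike.re (g x) = f x := fun x => f.toLinearMap.extendTo𝕜'_apply_re x
    have hb : ∀ x : E, ‖g (A x)‖ * r ≤ u * ‖x‖ := by
      intro x
      rcases eq_or_ne x 0 with rfl | hx
      · simp
      have hxn : 0 < ‖x‖ := norm_pos_iff.mpr hx
      rcases eq_or_ne (g (A x)) 0 with h0 | h0
      · rw [h0, norm_zero, zero_mul]; positivity
      set w : ℂ := g (A x) with hw
      set ζ : ℂ := (‖w‖ : ℂ) / w with hζ
      have hwn : ‖w‖ ≠ 0 := norm_ne_zero_iff.mpr h0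
      have hζn : ‖ζ‖ = 1 := by
        rw [hζ, norm_div]
        simp only [Complex.norm_real, norm_norm]
        exact div_self hwn
      set x' : E := ((r / ‖x‖ : ℝ) : ℂ) • ζ • x with hx'
      have hx'ball : x' ∈ Metric.closedBall (0 : E) r := by
        rw [Metric.mem_closedBall, dist_zero_right, hx', norm_smul, norm_smul, hζn]
        simp only [Complex.norm_real, Real.norm_eq_abs]
        rw [abs_of_pos (by positivity), one_mul]
        field_simp
        exact le_rfl
      have hgx' : g (A x') = (((r / ‖x‖) * ‖w‖ : ℝ) : ℂ) := by
        rw [hx', map_smul, map_smul, map_smul, map_smul, ← hw, hζ]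
        have : (‖w‖ : ℂ) / w * w = (‖w‖ : ℂ) := div_mul_cancel₀ _ h0
        rw [smul_eq_mul, smul_eq_mul, this]
        push_cast
        ring
      have hlt : (r / ‖x‖) * ‖w‖ < u := by
        have h1 := hfs (A x') (subset_closure ⟨x', hx'ball, rfl⟩)
        have h2 : f (A x') = (r / ‖x‖) * ‖w‖ := by
          rw [← hre (A x'), hgx']
          simp
        linarith [h2 ▸ h1]
      calc ‖w‖ * r = ((r / ‖x‖) * ‖w‖) * ‖x‖ := by field_simp
        _ ≤ u * ‖x‖ := by nlinarith
    have hgA : ‖dualOp A g‖ ≤ u / r := by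
      apply ContinuousLinearMap.opNorm_le_bound _ (by positivity)
      intro x
      have h1 := hb x
      have h2 : (dualOp A g) x = g (A x) := rfl
      rw [h2, div_mul_eq_mul_div, le_div_iff₀ hr]
      linarith
    have hgnorm : u < ‖g‖ * ‖y‖ := by
      have h1 : u < f y := hfy
      have h2 : f y = RCLike.re (g y) := (hre y).symm
      have h3 : RCLike.re (g y) ≤ ‖g y‖ := RCLike.re_le_norm _
      have h4 : ‖g y‖ ≤ ‖g‖ * ‖y‖ := g.le_opNorm y
      linarith
    have h5 : c * ‖g‖ ≤ u / r := le_trans (hA g) hgA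
    have h6 : c * ‖g‖ * r ≤ u := by
      rw [← le_div_iff₀ hr]; exact h5
    nlinarith [norm_nonneg g]
  have step2 : ∀ y : E, ∃ x, ‖x‖ ≤ 2 / c * ‖y‖ ∧ ‖y - A x‖ ≤ ‖y‖ / 2 := by
    intro y
    rcases eq_or_ne y 0 with rfl | hy
    · exact ⟨0, by simp, by simp⟩
    have hy' : 0 < ‖y‖ := norm_pos_iff.mpr hy
    have h1 := step1 y (2 * ‖y‖ / c) (by positivity)
      (by
        have h2 : c * (2 * ‖y‖ / c) = 2 * ‖y‖ := by field_simp
        rw [h2]; linarith)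
    rw [Metric.mem_closure_iff] at h1
    obtain ⟨v, hv, hdist⟩ := h1 (‖y‖ / 2) (by positivity)
    obtain ⟨x, hxball, rfl⟩ := hv
    refine ⟨x, ?_, ?_⟩
    · have : ‖x‖ ≤ 2 * ‖y‖ / c := by
        simpa [dist_zero_right] using hxball
      calc ‖x‖ ≤ 2 * ‖y‖ / c := this
        _ = 2 / c * ‖y‖ := by ring
    · rw [dist_eq_norm] at hdist
      exact hdist.le
  -- step 3: iteration
  intro y
  choose G hG1 hG2 using step2
  set W : ℕ → E := fun n => (fun v => v - A (G v))^[n] y with hWdef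
  have hW0 : W 0 = y := rfl
  have hWs : ∀ n, W (n + 1) = W n - A (G (W n)) := by
    intro n
    rw [hWdef]
    exact Function.iterate_succ_apply' _ _ _
  have hdecay : ∀ n, ‖W n‖ ≤ (1 / 2) ^ n * ‖y‖ := by
    intro n
    induction n with
    | zero => simp [hW0]
    | succ n ih =>
      rw [hWs n]
      calc ‖W n - A (G (W n))‖ ≤ ‖W n‖ / 2 := hG2 (W n)
        _ ≤ ((1 / 2) ^ n * ‖y‖) / 2 := by linarith
        _ = (1 / 2) ^ (n + 1) * ‖y‖ := by ring
  have hxb : ∀ n, ‖G (W n)‖ ≤ (2 / c * ‖y‖) * (1 / 2) ^ n := by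
    intro n
    calc ‖G (W n)‖ ≤ 2 / c * ‖W n‖ := hG1 (W n)
      _ ≤ 2 / c * ((1 / 2) ^ n * ‖y‖) := by
          apply mul_le_mul_of_nonneg_left (hdecay n) (by positivity)
      _ = (2 / c * ‖y‖) * (1 / 2) ^ n := by ring
  have hsum : Summable (fun n => G (W n)) := by
    apply Summable.of_norm_bounded ?_ hxb
    exact (summable_geometric_of_lt_one (by norm_num) (by norm_num)).mul_left _
  set x : E := ∑' n, G (W n) with hx
  have hAx : HasSum (fun n => A (G (W n))) (A x) := hsum.hasSum.mapL A
  have htel : ∀ n, ∑ i ∈ Finset.range n, A (G (W i)) = y - W n := by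
    intro n
    induction n with
    | zero => simp [hW0]
    | succ n ih =>
      rw [Finset.sum_range_succ, ih, hWs n]
      abel
  have hWlim : Tendsto W atTop (𝓝 0) := by
    apply squeeze_zero_norm hdecay
    have := tendsto_pow_atTop_nhds_zero_of_lt_one (by norm_num : (0:ℝ) ≤ 1/2) (by norm_num)
    simpa using this.mul_const ‖y‖
  have hlim : Tendsto (fun n => ∑ i ∈ Finset.range n, A (G (W i))) atTop (𝓝 y) := by
    simp only [htel]
    simpa using tendsto_const_nhds.sub hWlim
  exact ⟨x, tendsto_nhds_unique hAx.tendsto_sum_nat hlim⟩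

theorem approximate_eigenvectors_in_finite_codim {X Z : Type*}
    [NormedAddCommGroup X] [NormedSpace ℂ X] [CompleteSpace X]
    [NormedAddCommGroup Z] [NormedSpace ℂ Z] [CompleteSpace Z]
    (T : X →L[ℂ] X) (B : Z →L[ℂ] Z)
    (q : X →L[ℂ] Z) (hqinj : Function.Injective q)
    (hqcl : IsClosed (Set.range q))
    (hq : ∀ x : X, q (T x) = B (q x))
    (lam : ℂ)
    (hlam : lam ∈ spectrum ℂ T \
      (pointSpectrum (dualOp T) ∪ pointSpectrum (dualOp B) ∪ residualSpectrum (dualOp B)))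
    (X₀ : Submodule ℂ (StrongDual ℂ X)) (hX₀cl : IsClosed (X₀ : Set (StrongDual ℂ X)))
    (hX₀fc : FiniteDimensional ℂ (StrongDual ℂ X ⧸ X₀)) :
    ∃ zs : ℕ → StrongDual ℂ Z,
      (∀ n, dualOp q (zs n) ∈ X₀ ∧ ‖dualOp q (zs n)‖ = 1) ∧
      Tendsto (fun n => ‖lam • zs n - dualOp B (zs n)‖) atTop (𝓝 0) := by
  classical
  obtain ⟨hspec, hnotin⟩ := hlam
  rw [Set.mem_union, Set.mem_union] at hnotin
  push_neg at hnotin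
  obtain ⟨⟨hpT, hpB⟩, hrB⟩ := hnotin
  set SB : StrongDual ℂ Z →L[ℂ] StrongDual ℂ Z :=
    lam • ContinuousLinearMap.id ℂ (StrongDual ℂ Z) - dualOp B with hSBdef
  set ST : StrongDual ℂ X →L[ℂ] StrongDual ℂ X :=
    lam • ContinuousLinearMap.id ℂ (StrongDual ℂ X) - dualOp T with hSTdef
  have hSBapp : ∀ g, SB g = lam • g - dualOp B g := fun g => by
    rw [hSBdef]; simp
  have hSTapp : ∀ f, ST f = lam • f - dualOp T f := fun f => by
    rw [hSTdef]; simp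
  have hQB : ∀ g : StrongDual ℂ Z, dualOp q (dualOp B g) = dualOp T (dualOp q g) := by
    intro g; ext x
    simp only [dualOp_apply']
    rw [hq x]
  have hQSB : ∀ g, dualOp q (SB g) = ST (dualOp q g) := by
    intro g
    rw [hSBapp, hSTapp, map_sub, map_smul, hQB]
  have hSTinj : ∀ f, ST f = 0 → f = 0 := by
    intro f hf
    by_contra hne
    exact hpT ⟨f, hne, (sub_eq_zero.mp (by rw [← hSTapp f, hf])).symm⟩
  have hSBinj : ∀ g, SB g = 0 → g = 0 := by
    intro g hg
    by_contra hne
    exact hpB ⟨g, hne, (sub_eq_zero.mp (by rw [← hSBapp g, hg])).symm⟩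
  have hSBfun : (fun g : StrongDual ℂ Z => lam • g - dualOp B g) = ⇑SB := by
    funext g; rw [hSBapp]
  have hSBinj' : Function.Injective ⇑SB := by
    intro a b hab
    have h1 : SB (a - b) = 0 := by rw [map_sub, hab, sub_self]
    exact sub_eq_zero.mp (hSBinj _ h1)
  have hSBdense : Dense (Set.range ⇑SB) := by
    by_contra hd
    exact hrB ⟨by rw [hSBfun]; exact hSBinj', by rw [hSBfun]; exact hd⟩
  obtain ⟨C, hC, hlift⟩ := exists_dual_lift q hqinj hqcl
  have hQsurj : Function.Surjective ⇑(dualOp q) := fun f =>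
    ⟨(hlift f).choose, (hlift f).choose_spec.1⟩
  -- injectivity of lam - T
  set T' : X →L[ℂ] X := lam • ContinuousLinearMap.id ℂ X - T with hT'def
  have hT'app : ∀ x, T' x = lam • x - T x := fun x => by rw [hT'def]; simp
  have hT'inj : ∀ x, T' x = 0 → x = 0 := by
    intro x hx
    by_contra hxne
    have hqx : q x ≠ 0 := fun h => hxne (hqinj (by simpa using h))
    have hTx : T x = lam • x := (sub_eq_zero.mp (by rw [← hT'app x, hx])).symm
    have hBqx : B (q x) = lam • q x := by rw [← hq x, hTx, map_smul]
    have hval : ∀ g : StrongDual ℂ Z, SB g (q x) = 0 := by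
      intro g
      rw [hSBapp]
      simp [hBqx]
    obtain ⟨g₀, hg₀n, hg₀v⟩ := exists_dual_vector ℂ (q x) (norm_ne_zero_iff.mpr hqx)
    have h3 : g₀ ∈ closure (Set.range ⇑SB) := by rw [hSBdense.closure_eq]; trivial
    rw [Metric.mem_closure_iff] at h3
    obtain ⟨p, hp, hpd⟩ := h3 (1 / 2) (by norm_num)
    obtain ⟨g, rfl⟩ := hp
    have h4 : ‖q x‖ = ‖(g₀ - SB g) (q x)‖ := by
      rw [ContinuousLinearMap.sub_apply, hval g, sub_zero, hg₀v]
      simp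
    have h5 : ‖(g₀ - SB g) (q x)‖ ≤ ‖g₀ - SB g‖ * ‖q x‖ :=
      (g₀ - SB g).le_opNorm (q x)
    have h6 : ‖g₀ - SB g‖ < 1 / 2 := by rw [← dist_eq_norm]; exact hpd
    have h7 : 0 < ‖q x‖ := norm_pos_iff.mpr hqx
    nlinarith
  -- approximate eigenfunctionals of ST inside X₀
  have hF5 : ∀ ε : ℝ, 0 < ε → ∃ f, f ∈ X₀ ∧ ‖f‖ = 1 ∧ ‖ST f‖ ≤ ε := by
    by_contra hcon
    push_neg at hcon
    obtain ⟨ε, hε, hbig⟩ := hcon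
    have hX₀bdd : ∀ f ∈ X₀, ε * ‖f‖ ≤ ‖ST f‖ := by
      intro f hf
      rcases eq_or_ne f 0 with rfl | hne
      · simp
      have hfn : 0 < ‖f‖ := norm_pos_iff.mpr hne
      have hf'mem : ((‖f‖ : ℂ))⁻¹ • f ∈ X₀ := X₀.smul_mem _ hf
      have hf'n : ‖((‖f‖ : ℂ))⁻¹ • f‖ = 1 := by
        rw [norm_smul, norm_inv, Complex.norm_real, Real.norm_eq_abs,
          abs_of_pos hfn, inv_mul_cancel₀ hfn.ne']
      have h1 := hbig _ hf'mem hf'n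
      rw [map_smul, norm_smul, norm_inv, Complex.norm_real, Real.norm_eq_abs,
        abs_of_pos hfn] at h1
      calc ε * ‖f‖ ≤ (‖f‖⁻¹ * ‖ST f‖) * ‖f‖ := by nlinarith
        _ = ‖ST f‖ := by field_simp
    have hglob : ∃ c : ℝ, 0 < c ∧ ∀ f : StrongDual ℂ X, c * ‖f‖ ≤ ‖ST f‖ := by
      by_contra hg
      push_neg at hg
      have hseq : ∀ n : ℕ, ∃ f : StrongDual ℂ X, ‖f‖ = 1 ∧ ‖ST f‖ ≤ 1 / ((n : ℝ) + 1) := by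
        intro n
        obtain ⟨f, hf⟩ := hg (1 / ((n : ℝ) + 1)) (by positivity)
        have hfne : f ≠ 0 := by
          rintro rfl
          simp at hf
        have hfn : 0 < ‖f‖ := norm_pos_iff.mpr hfne
        refine ⟨((‖f‖ : ℂ))⁻¹ • f, ?_, ?_⟩
        · rw [norm_smul, norm_inv, Complex.norm_real, Real.norm_eq_abs,
            abs_of_pos hfn, inv_mul_cancel₀ hfn.ne']
        · rw [map_smul, norm_smul, norm_inv, Complex.norm_real, Real.norm_eq_abs,
            abs_of_pos hfn]
          rw [inv_mul_le_iff₀ hfn]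
          nlinarith
      choose fs hfs1 hfs2 using hseq
      haveI := hX₀cl
      obtain ⟨s, hs⟩ := X₀.mkQ.exists_rightInverse_of_surjective
        (LinearMap.range_eq_top.mpr (Submodule.mkQ_surjective X₀))
      have hsq : ∀ ξ, X₀.mkQ (s ξ) = ξ := fun ξ => LinearMap.congr_fun hs ξ
      have hscont : Continuous s := s.continuous_of_finiteDimensional
      haveI : ProperSpace (StrongDual ℂ X ⧸ X₀) := FiniteDimensional.proper ℂ (StrongDual ℂ X ⧸ X₀)
      have hξball : ∀ n, X₀.mkQ (fs n) ∈ Metric.closedBall (0 : StrongDual ℂ X ⧸ X₀) 1 := by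
        intro n
        rw [Metric.mem_closedBall]
        refine (dist_zero_right (X₀.mkQ (fs n))).le.trans ?_
        calc ‖X₀.mkQ (fs n)‖ ≤ ‖fs n‖ := by
              rw [Submodule.mkQ_apply]
              exact Submodule.Quotient.norm_mk_le _ _
          _ = 1 := hfs1 n
      obtain ⟨ξ, -, φ, hφmono, hφlim⟩ :=
        (isCompact_closedBall (0 : StrongDual ℂ X ⧸ X₀) 1).tendsto_subseq hξball
      set d : ℕ → StrongDual ℂ X := fun n => fs n - s (X₀.mkQ (fs n)) with hd
      have hdmem : ∀ n, d n ∈ X₀ := by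
        intro n
        have h1 : X₀.mkQ (d n) = 0 := by
          rw [hd]
          simp only [map_sub, hsq]
          exact sub_self _
        rw [Submodule.mkQ_apply] at h1
        exact (Submodule.Quotient.mk_eq_zero X₀).mp h1
      have hSTfs : Tendsto (fun k => ST (fs (φ k))) atTop (𝓝 0) := by
        apply squeeze_zero_norm ?_ tendsto_one_div_add_atTop_nhds_zero_nat
        intro k
        calc ‖ST (fs (φ k))‖ ≤ 1 / ((φ k : ℝ) + 1) := hfs2 (φ k)
          _ ≤ 1 / ((k : ℝ) + 1) := by
            apply one_div_le_one_div_of_le (by positivity)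
            have hk : (k : ℝ) ≤ (φ k : ℝ) := by exact_mod_cast hφmono.le_apply
            linarith
      have hSTd : Tendsto (fun k => ST (d (φ k))) atTop (𝓝 (-(ST (s ξ)))) := by
        have h2 : Tendsto (fun k => ST (s (X₀.mkQ (fs (φ k))))) atTop (𝓝 (ST (s ξ))) :=
          ((ST.continuous.comp hscont).tendsto ξ).comp hφlim
        have h3 := hSTfs.sub h2
        rw [zero_sub] at h3
        have h4 : (fun k => ST (fs (φ k)) - ST (s (X₀.mkQ (fs (φ k))))) =
            (fun k => ST (d (φ k))) := by
          funext k
          rw [hd]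
          simp only [map_sub]
        rwa [h4] at h3
      have hdcauchy : CauchySeq (fun k => d (φ k)) := by
        have hconv : CauchySeq (fun k => ST (d (φ k))) := hSTd.cauchySeq
        rw [Metric.cauchySeq_iff] at hconv ⊢
        intro δ hδ
        obtain ⟨Nn, hN⟩ := hconv (ε * δ) (by positivity)
        refine ⟨Nn, fun i hi j hj => ?_⟩
        have h1 := hX₀bdd _ (sub_mem (hdmem (φ i)) (hdmem (φ j)))
        rw [map_sub] at h1
        have h2 := hN i hi j hj
        rw [dist_eq_norm] at h2 ⊢
        nlinarith [norm_nonneg (d (φ i) - d (φ j))]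
      obtain ⟨dl, hdl⟩ := cauchySeq_tendsto_of_complete hdcauchy
      have hdlX₀ : dl ∈ X₀ :=
        hX₀cl.mem_of_tendsto hdl (Eventually.of_forall fun k => hdmem (φ k))
      have hSTdl : ST dl = -(ST (s ξ)) :=
        tendsto_nhds_unique ((ST.continuous.tendsto dl).comp hdl) hSTd
      have hzero : dl + s ξ = 0 := by
        apply hSTinj
        rw [map_add, hSTdl, neg_add_cancel]
      have hfs_lim : Tendsto (fun k => fs (φ k)) atTop (𝓝 (dl + s ξ)) := by
        have h2 : Tendsto (fun k => s (X₀.mkQ (fs (φ k)))) atTop (𝓝 (s ξ)) :=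
          ((hscont.tendsto ξ).comp hφlim)
        have h3 := hdl.add h2
        have h4 : (fun k => d (φ k) + s (X₀.mkQ (fs (φ k)))) = fun k => fs (φ k) := by
          funext k
          rw [hd]
          simp only
          exact sub_add_cancel _ _
        rwa [h4] at h3
      rw [hzero] at hfs_lim
      have h4 : Tendsto (fun k => ‖fs (φ k)‖) atTop (𝓝 0) := by
        simpa using hfs_lim.norm
      have h5 : Tendsto (fun _ : ℕ => (1 : ℝ)) atTop (𝓝 0) := by
        convert h4 using 2 with k
        exact (hfs1 (φ k)).symm
      have h6 := tendsto_nhds_unique h5 tendsto_const_nhds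
      norm_num at h6
    obtain ⟨c, hc, hcb⟩ := hglob
    have hdualT' : ∀ f, dualOp T' f = ST f := by
      intro f; ext x
      rw [hSTapp, hT'def]
      simp
    have hsurjT' : Function.Surjective ⇑T' :=
      surjective_of_dual_bound T' c hc (fun f => by rw [hdualT']; exact hcb f)
    have hker : LinearMap.ker (T' : X →ₗ[ℂ] X) = ⊥ := LinearMap.ker_eq_bot'.mpr hT'inj
    have hrange : LinearMap.range (T' : X →ₗ[ℂ] X) = ⊤ := LinearMap.range_eq_top.mpr hsurjT'
    have hunit : IsUnit (algebraMap ℂ (X →L[ℂ] X) lam - T) := by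
      have halg : algebraMap ℂ (X →L[ℂ] X) lam - T = T' := by
        ext x
        rw [hT'app]
        simp [Algebra.algebraMap_eq_smul_one]
      rw [halg]
      set e := ContinuousLinearEquiv.ofBijective T' hker hrange with he
      refine ⟨⟨T', (e.symm : X →L[ℂ] X), ?_, ?_⟩, rfl⟩
      · ext x
        exact e.apply_symm_apply x
      · ext x
        exact e.symm_apply_apply x
    rw [spectrum.mem_iff] at hspec
    exact hspec hunit
  -- main construction
  have main : ∀ ε : ℝ, 0 < ε →
      ∃ g, dualOp q g ∈ X₀ ∧ ‖dualOp q g‖ = 1 ∧ ‖SB g‖ ≤ ε := by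
    set N : Submodule ℂ (StrongDual ℂ Z) := LinearMap.ker (dualOp q : StrongDual ℂ Z →ₗ[ℂ] StrongDual ℂ X) with hN
    have hNmem : ∀ g, g ∈ N ↔ dualOp q g = 0 := fun g => LinearMap.mem_ker
    have hNclosed : IsClosed (N : Set (StrongDual ℂ Z)) := by
      have h1 : (N : Set (StrongDual ℂ Z)) = ⇑(dualOp q) ⁻¹' {0} := by
        ext g; simp [hNmem]
      rw [h1]
      exact isClosed_singleton.preimage (dualOp q).continuous
    by_cases hcase : (N : Set (StrongDual ℂ Z)) ⊆ closure (⇑SB '' (N : Set (StrongDual ℂ Z)))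
    · -- CASE I : SB has dense range on N
      intro ε hε
      obtain ⟨f, hfX₀, hf1, hfST⟩ := hF5 (ε / (2 * C + 2)) (by positivity)
      obtain ⟨z, hz, -⟩ := hlift f
      obtain ⟨v, hv, hvnorm⟩ := hlift (ST f)
      set w : StrongDual ℂ Z := SB z - v with hw
      have hwN : w ∈ N := by
        rw [hNmem, hw, map_sub, hQSB, hz, hv, sub_self]
      have hwcl : w ∈ closure (⇑SB '' (N : Set (StrongDual ℂ Z))) := hcase hwN
      rw [Metric.mem_closure_iff] at hwcl
      obtain ⟨p, hp, hpd⟩ := hwcl (ε / 2) (by positivity)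
      obtain ⟨u, huN, rfl⟩ := hp
      have hQu : dualOp q u = 0 := (hNmem u).mp huN
      refine ⟨z - u, ?_, ?_, ?_⟩
      · rw [map_sub, hz, hQu, sub_zero]
        exact hfX₀
      · rw [map_sub, hz, hQu, sub_zero]
        exact hf1
      · have hsplit : SB (z - u) = v + (w - SB u) := by
          rw [map_sub, hw]
          abel
        rw [hsplit]
        have h1 : ‖w - SB u‖ < ε / 2 := by rw [← dist_eq_norm]; exact hpd
        have h2 : ‖v‖ ≤ C * (ε / (2 * C + 2)) := by
          calc ‖v‖ ≤ C * ‖ST f‖ := hvnorm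
            _ ≤ C * (ε / (2 * C + 2)) := by nlinarith
        have h3 : C * (ε / (2 * C + 2)) ≤ ε / 2 := by
          rw [mul_div_assoc', div_le_div_iff₀ (by positivity) (by positivity)]
          nlinarith
        calc ‖v + (w - SB u)‖ ≤ ‖v‖ + ‖w - SB u‖ := norm_add_le _ _
          _ ≤ ε / 2 + ε / 2 := by linarith
          _ = ε := by ring
    · -- CASE II
      rw [Set.not_subset] at hcase
      obtain ⟨ν, hνN, hν⟩ := hcase
      intro ε hε
      by_contra hcon
      push_neg at hcon
      have Hε : ∀ g, dualOp q g ∈ X₀ → ε * ‖dualOp q g‖ ≤ ‖SB g‖ := by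
        intro g hg
        rcases eq_or_ne (dualOp q g) 0 with h0 | h0
        · rw [h0, norm_zero, mul_zero]
          exact norm_nonneg _
        have hgn : 0 < ‖dualOp q g‖ := norm_pos_iff.mpr h0
        set g' : StrongDual ℂ Z := ((‖dualOp q g‖ : ℂ))⁻¹ • g with hg'
        have h1 : dualOp q g' ∈ X₀ := by
          rw [hg', map_smul]
          exact X₀.smul_mem _ hg
        have h2 : ‖dualOp q g'‖ = 1 := by
          rw [hg', map_smul, norm_smul, norm_inv, Complex.norm_real, Real.norm_eq_abs,
            abs_of_pos hgn, inv_mul_cancel₀ hgn.ne']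
        have h3 := hcon g' h1 h2
        rw [hg', map_smul, norm_smul, norm_inv, Complex.norm_real, Real.norm_eq_abs,
          abs_of_pos hgn] at h3
        calc ε * ‖dualOp q g‖ ≤ (‖dualOp q g‖⁻¹ * ‖SB g‖) * ‖dualOp q g‖ := by nlinarith
          _ = ‖SB g‖ := by field_simp
      -- the closure of SB '' N as a submodule
      set W₀ : Submodule ℂ (StrongDual ℂ Z) := (N.map SB.toLinearMap).topologicalClosure with hW₀
      have hW₀coe : (W₀ : Set (StrongDual ℂ Z)) = closure (⇑SB '' (N : Set (StrongDual ℂ Z))) := by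
        rw [hW₀, Submodule.topologicalClosure_coe, Submodule.map_coe]
        rfl
      have hW₀closed : IsClosed (W₀ : Set (StrongDual ℂ Z)) :=
        Submodule.isClosed_topologicalClosure _
      have hmapN : N.map SB.toLinearMap ≤ N := by
        rintro - ⟨n, hn, rfl⟩
        rw [hNmem]
        show dualOp q (SB n) = 0
        rw [hQSB, (hNmem n).mp hn, map_zero]
      have hW₀N : W₀ ≤ N := Submodule.topologicalClosure_minimal _ hmapN hNclosed
      have hNW₀ : N.map SB.toLinearMap ≤ W₀ := Submodule.le_topologicalClosure _
      set Y : Submodule ℂ (StrongDual ℂ Z) := X₀.comap (dualOp q).toLinearMap with hY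
      have hYmem : ∀ g, g ∈ Y ↔ dualOp q g ∈ X₀ := fun g => Submodule.mem_comap
      have hstar : ∀ y ∈ Y, ∀ w ∈ W₀, ε * ‖dualOp q y‖ ≤ ‖SB y - w‖ := by
        intro y hy
        have hsub : (⇑SB '' (N : Set (StrongDual ℂ Z))) ⊆
            {w : StrongDual ℂ Z | ε * ‖dualOp q y‖ ≤ ‖SB y - w‖} := by
          rintro - ⟨n, hn, rfl⟩
          have hQn : dualOp q n = 0 := (hNmem n).mp hn
          have h1 : dualOp q (y - n) ∈ X₀ := by
            rw [map_sub, hQn, sub_zero]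
            exact (hYmem y).mp hy
          have h2 := Hε (y - n) h1
          rw [map_sub, hQn, sub_zero, map_sub] at h2
          exact h2
        have hclosed : IsClosed {w : StrongDual ℂ Z | ε * ‖dualOp q y‖ ≤ ‖SB y - w‖} := by
          apply isClosed_le continuous_const
          exact (continuous_const.sub continuous_id).norm
        intro w hw
        have h3 : (W₀ : Set (StrongDual ℂ Z)) ⊆ {w | ε * ‖dualOp q y‖ ≤ ‖SB y - w‖} := by
          rw [hW₀coe]
          exact closure_minimal hsub hclosed
        exact h3 hw
      set V₀ : Submodule ℂ (StrongDual ℂ Z) := (Y.map SB.toLinearMap) ⊔ W₀ with hV₀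
      have hV₀closed : IsClosed (V₀ : Set (StrongDual ℂ Z)) := by
        rw [← closure_subset_iff_isClosed]
        intro v hv
        obtain ⟨vs, hvs, hvlim⟩ := mem_closure_iff_seq_limit.mp hv
        have hdecomp : ∀ n : ℕ, ∃ y ∈ Y, ∃ b ∈ W₀, SB y + b = vs n := by
          intro n
          obtain ⟨a, ha, b, hb, hab⟩ := Submodule.mem_sup.mp (hvs n)
          obtain ⟨y, hy, rfl⟩ := ha
          exact ⟨y, hy, b, hb, hab⟩
        choose ys hys bs hbs habs using hdecomp
        have key : ∀ i j : ℕ, ε * ‖dualOp q (ys i) - dualOp q (ys j)‖ ≤ ‖vs i - vs j‖ := by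
          intro i j
          have h1 : ys i - ys j ∈ Y := sub_mem (hys i) (hys j)
          have h2 : bs j - bs i ∈ W₀ := sub_mem (hbs j) (hbs i)
          have h3 := hstar _ h1 _ h2
          rw [map_sub] at h3
          have h4 : SB (ys i) - SB (ys j) - (bs j - bs i) = vs i - vs j := by
            rw [← habs i, ← habs j]
            abel
          rw [map_sub, h4] at h3
          exact h3
        have hQcauchy : CauchySeq (fun n => dualOp q (ys n)) := by
          have hvc : CauchySeq vs := hvlim.cauchySeq
          rw [Metric.cauchySeq_iff] at hvc ⊢
          intro δ hδ
          obtain ⟨Nn, hNn⟩ := hvc (ε * δ) (by positivity)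
          refine ⟨Nn, fun i hi j hj => ?_⟩
          have h1 := key i j
          have h2 := hNn i hi j hj
          rw [dist_eq_norm] at h2 ⊢
          nlinarith [norm_nonneg (dualOp q (ys i) - dualOp q (ys j))]
        obtain ⟨x, hx⟩ := cauchySeq_tendsto_of_complete hQcauchy
        have hxX₀ : x ∈ X₀ :=
          hX₀cl.mem_of_tendsto hx (Eventually.of_forall fun n => (hYmem (ys n)).mp (hys n))
        obtain ⟨y, hyQ, -⟩ := hlift x
        have hyY : y ∈ Y := (hYmem y).mpr (by rw [hyQ]; exact hxX₀)
        have happrox : ∀ n : ℕ, ∃ m ∈ W₀,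
            ‖v - SB y - m‖ ≤ ‖v - vs n‖ + ‖SB‖ * (C * ‖dualOp q (ys n) - x‖) := by
          intro n
          obtain ⟨u, huQ, hun⟩ := hlift (dualOp q (ys n) - x)
          have hnn : ys n - y - u ∈ N := by
            rw [hNmem, map_sub, map_sub, hyQ, huQ]
            abel
          refine ⟨bs n + SB (ys n - y - u), add_mem (hbs n) (hNW₀ ⟨_, hnn, rfl⟩), ?_⟩
          have heq : v - SB y - (bs n + SB (ys n - y - u)) = (v - vs n) + SB u := by
            rw [map_sub, map_sub, ← habs n]
            abel
          rw [heq]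
          calc ‖(v - vs n) + SB u‖ ≤ ‖v - vs n‖ + ‖SB u‖ := norm_add_le _ _
            _ ≤ ‖v - vs n‖ + ‖SB‖ * ‖u‖ := by
                have := SB.le_opNorm u
                linarith
            _ ≤ ‖v - vs n‖ + ‖SB‖ * (C * ‖dualOp q (ys n) - x‖) := by
                have h5 : ‖SB‖ * ‖u‖ ≤ ‖SB‖ * (C * ‖dualOp q (ys n) - x‖) :=
                  mul_le_mul_of_nonneg_left hun (norm_nonneg SB)
                linarith
        have hvW₀ : v - SB y ∈ W₀ := by
          have hset : v - SB y ∈ (W₀ : Set (StrongDual ℂ Z)) := by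
            rw [← hW₀closed.closure_eq, Metric.mem_closure_iff]
            intro δ hδ
            have hlim1 : Tendsto (fun n => ‖v - vs n‖ + ‖SB‖ * (C * ‖dualOp q (ys n) - x‖))
                atTop (𝓝 0) := by
              have l1 : Tendsto (fun n => ‖v - vs n‖) atTop (𝓝 0) := by
                have := (tendsto_const_nhds (x := v)).sub hvlim
                simpa using this.norm
              have l2 : Tendsto (fun n => ‖dualOp q (ys n) - x‖) atTop (𝓝 0) := by
                have := hx.sub (tendsto_const_nhds (x := x))
                simpa using this.norm
              have := l1.add ((l2.const_mul C).const_mul ‖SB‖)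
              simpa [mul_comm, mul_assoc, mul_left_comm] using this
            rw [Metric.tendsto_atTop] at hlim1
            obtain ⟨n, hn⟩ := hlim1 δ hδ
            obtain ⟨m, hm, hmd⟩ := happrox n
            refine ⟨m, hm, ?_⟩
            have h6 := hn n le_rfl
            rw [Real.dist_eq, sub_zero] at h6
            have h7 : |‖v - vs n‖ + ‖SB‖ * (C * ‖dualOp q (ys n) - x‖)| < δ := h6
            rw [dist_eq_norm]
            calc ‖v - SB y - m‖ ≤ ‖v - vs n‖ + ‖SB‖ * (C * ‖dualOp q (ys n) - x‖) := hmd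
              _ ≤ |‖v - vs n‖ + ‖SB‖ * (C * ‖dualOp q (ys n) - x‖)| := le_abs_self _
              _ < δ := h7
          exact hset
        have : v = SB y + (v - SB y) := by abel
        rw [this]
        exact add_mem (Submodule.mem_sup_left ⟨y, hyY, rfl⟩) (Submodule.mem_sup_right hvW₀)
      -- finite-dimensional complement of Y
      obtain ⟨EY, hcompl⟩ := Submodule.exists_isCompl Y
      haveI := hX₀cl
      haveI hEYfd : FiniteDimensional ℂ EY := by
        set ρ : StrongDual ℂ Z →ₗ[ℂ] (StrongDual ℂ X ⧸ X₀) := X₀.mkQ ∘ₗ (dualOp q).toLinearMap with hρ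
        have hρsurj : Function.Surjective ρ := by
          rw [hρ, LinearMap.coe_comp]
          exact (Submodule.mkQ_surjective X₀).comp hQsurj
        have hρker : LinearMap.ker ρ = Y := by
          ext g
          rw [LinearMap.mem_ker, hYmem]
          rw [hρ, LinearMap.comp_apply]
          rw [Submodule.mkQ_apply]
          rw [Submodule.Quotient.mk_eq_zero X₀]
          rfl
        have e1 : (StrongDual ℂ Z ⧸ LinearMap.ker ρ) ≃ₗ[ℂ] (StrongDual ℂ X ⧸ X₀) :=
          LinearMap.quotKerEquivOfSurjective ρ hρsurj
        have e2 : (StrongDual ℂ Z ⧸ Y) ≃ₗ[ℂ] EY := Submodule.quotientEquivOfIsCompl Y EY hcompl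
        have e3 : (StrongDual ℂ Z ⧸ Y) ≃ₗ[ℂ] (StrongDual ℂ Z ⧸ LinearMap.ker ρ) :=
          Submodule.quotEquivOfEq _ _ hρker.symm
        exact LinearEquiv.finiteDimensional (e1.symm.trans (e3.symm.trans e2))
      haveI : FiniteDimensional ℂ (EY.map SB.toLinearMap) := Module.Finite.map EY SB.toLinearMap
      set V : Submodule ℂ (StrongDual ℂ Z) := V₀ ⊔ (EY.map SB.toLinearMap) with hV
      have hVclosed : IsClosed (V : Set (StrongDual ℂ Z)) :=
        isClosed_sup_fd V₀ (EY.map SB.toLinearMap) hV₀closed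
      have hrange_sub : Set.range ⇑SB ⊆ (V : Set (StrongDual ℂ Z)) := by
        rintro - ⟨g, rfl⟩
        have hg : g ∈ Y ⊔ EY := by
          rw [hcompl.sup_eq_top]
          trivial
        obtain ⟨y, hy, e, he, rfl⟩ := Submodule.mem_sup.mp hg
        rw [map_add]
        exact add_mem
          (Submodule.mem_sup_left (Submodule.mem_sup_left ⟨y, hy, rfl⟩))
          (Submodule.mem_sup_right ⟨e, he, rfl⟩)
      have hVuniv : (V : Set (StrongDual ℂ Z)) = Set.univ := by
        apply eq_univ_of_univ_subset
        calc Set.univ = closure (Set.range ⇑SB) := hSBdense.closure_eq.symm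
          _ ⊆ closure (V : Set (StrongDual ℂ Z)) := closure_mono hrange_sub
          _ = (V : Set (StrongDual ℂ Z)) := hVclosed.closure_eq
      have hνV : ν ∈ V := by
        have h1 : ν ∈ (V : Set (StrongDual ℂ Z)) := by rw [hVuniv]; trivial
        exact h1
      obtain ⟨aa, haa, bb, hbb, habb⟩ := Submodule.mem_sup.mp hνV
      obtain ⟨a1, ha1, w1, hw1, ha1w⟩ := Submodule.mem_sup.mp haa
      obtain ⟨y1, hy1, rfl⟩ := ha1
      obtain ⟨e1, he1, rfl⟩ := hbb
      have hQw1 : dualOp q w1 = 0 := (hNmem w1).mp (hW₀N hw1)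
      have hQν : dualOp q ν = 0 := (hNmem ν).mp hνN
      have hkey : ST (dualOp q (y1 + e1)) = 0 := by
        rw [← hQSB]
        have hsum : SB (y1 + e1) = ν - w1 := by
          rw [map_add]
          have : SB.toLinearMap y1 + w1 + SB.toLinearMap e1 = ν := by rw [ha1w, habb]
          have h2 : SB.toLinearMap y1 = SB y1 := rfl
          have h3 : SB.toLinearMap e1 = SB e1 := rfl
          rw [h2, h3] at this
          rw [← this]
          abel
        rw [hsum, map_sub, hQν, hQw1, sub_self]
      have hQy1e1 : dualOp q (y1 + e1) = 0 := hSTinj _ hkey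
      have hy1e1N : y1 + e1 ∈ N := (hNmem _).mpr hQy1e1
      have hSBmem : SB (y1 + e1) ∈ W₀ := hNW₀ ⟨y1 + e1, hy1e1N, rfl⟩
      have hνW₀ : ν ∈ W₀ := by
        have hsum : SB (y1 + e1) = ν - w1 := by
          rw [map_add]
          have : SB.toLinearMap y1 + w1 + SB.toLinearMap e1 = ν := by rw [ha1w, habb]
          have h2 : SB.toLinearMap y1 = SB y1 := rfl
          have h3 : SB.toLinearMap e1 = SB e1 := rfl
          rw [h2, h3] at this
          rw [← this]
          abel
        have : ν = SB (y1 + e1) + w1 := by rw [hsum]; abel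
        rw [this]
        exact add_mem hSBmem hw1
      exact hν (by rw [← hW₀coe]; exact hνW₀)
  choose zs h1 h2 h3 using fun n : ℕ => main (1 / ((n : ℝ) + 1)) (by positivity)
  refine ⟨zs, fun n => ⟨h1 n, h2 n⟩, ?_⟩
  have hb : ∀ n : ℕ, ‖lam • zs n - dualOp B (zs n)‖ ≤ 1 / ((n : ℝ) + 1) := fun n => by
    rw [← hSBapp]; exact h3 n
  exact squeeze_zero (fun n => norm_nonneg _) hb tendsto_one_div_add_atTop_nhds_zero_nat
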